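/- Let k be a field, Q a strongly locally finite quiver, and M an infinite dimensional representation in rep(Q). Then: (1) if M is finitely presented, then supp M contains a right infinite path; (2) if M is finitely co-presented, then supp M contains a left infinite path. -/

import Mathlib

open CategoryTheory CategoryTheory.Limits

/-- A quiver is strongly locally finite if it is locally finite (finitely many arrows
starting and ending at every vertex) and interval-finite (finitely many paths between
any two vertices). -/
def StronglyLocallyFinite (Q : Type) [Quiver.{0} Q] : Prop :=
  (∀ x : Q, Finite (Σ y : Q, x ⟶ y)) ∧
  (∀ y : Q, Finite (Σ x : Q, x ⟶ y)) ∧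
  (∀ x y : Q, Finite (Quiver.Path x y))

variable (k : Type) [Field k] (Q : Type) [Quiver.{0} Q]

/-- The category `Rep(Q)` of `k`-representations of `Q`, i.e. functors from the
path category of `Q` to `k`-vector spaces. -/
abbrev RepQ := Paths Q ⥤ ModuleCat.{0} k

instance : HasFiniteBiproducts (RepQ k Q) := Abelian.hasFiniteBiproducts

variable {Q}

/-- A vertex of `Q`, seen as an object of the path category. -/
abbrev vtx (x : Q) : Paths Q := x

/-- An arrow of `Q`, seen as a morphism of the path category. -/
abbrev arr {x y : Q} (e : x ⟶ y) : vtx x ⟶ vtx y := e.toPath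

/-- A path of `Q`, seen as a morphism of the path category. -/
abbrev pth {x y : Q} (p : Quiver.Path x y) : vtx x ⟶ vtx y := p

universe uC vC

/-- Natural transformations between functors lifted from prefunctors are determined
by vertexwise data commuting with the arrow maps. -/
def liftNatTrans {C : Type uC} [Category.{vC} C] {φ ψ : Q ⥤q C}
    (app : ∀ x : Q, φ.obj x ⟶ ψ.obj x)
    (h : ∀ {x y : Q} (e : x ⟶ y), φ.map e ≫ app y = app x ≫ ψ.map e) :
    Paths.lift φ ⟶ Paths.lift ψ where
  app x := app x
  naturality := fun (x y : Q) (p : Quiver.Path x y) => by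
    induction p with
    | nil =>
      show (Paths.lift φ).map (𝟙 (vtx x)) ≫ app x = app x ≫ (Paths.lift ψ).map (𝟙 (vtx x))
      erw [CategoryTheory.Functor.map_id, CategoryTheory.Functor.map_id, Category.id_comp]
      exact (Category.comp_id _).symm
    | cons p e ih =>
      show ((Paths.lift φ).map (pth p) ≫ φ.map e) ≫ app _ =
        app x ≫ ((Paths.lift ψ).map (pth p) ≫ ψ.map e)
      erw [Category.assoc, h e, ← Category.assoc, ih,
        Category.assoc]
      rfl

variable (Q) in
/-- The prefunctor underlying the indecomposable projective representation `P_a`. -/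
noncomputable def projPre (a : Q) : Q ⥤q ModuleCat.{0} k where
  obj x := ModuleCat.of k (Quiver.Path a x →₀ k)
  map {x y} e := ModuleCat.ofHom (Finsupp.lmapDomain k k (fun ρ => ρ.cons e))

variable (Q) in
/-- The indecomposable projective representation `P_a`: the value at `x` is the
`k`-vector space with basis the set of paths from `a` to `x`, and an arrow acts by
composition of paths. -/
noncomputable def projRep (a : Q) : RepQ k Q := Paths.lift (projPre k Q a)

variable (Q) in
/-- The prefunctor underlying the indecomposable injective representation `I_a`. -/
noncomputable def injPre (a : Q) : Q ⥤q ModuleCat.{0} k where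
  obj x := ModuleCat.of k (Quiver.Path x a → k)
  map {x y} e := ModuleCat.ofHom (LinearMap.funLeft k k (fun σ : Quiver.Path y a => (Quiver.Hom.toPath e).comp σ))

variable (Q) in
/-- The indecomposable injective representation `I_a`: the value at `x` is the
`k`-vector space with basis the set of paths from `x` to `a` (realised as the dual-style
function space `Quiver.Path x a → k`, which is the same as the span of the paths since `Q`
is interval-finite); the arrow `α : x ⟶ y` sends a path `ρα` to `ρ` and kills the paths
not factoring through `α`. -/
noncomputable def injRep (a : Q) : RepQ k Q := Paths.lift (injPre k Q a)

variable (Q) in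
/-- The representation with value `k` everywhere, all arrows acting as the identity. -/
noncomputable def unitRep : RepQ k Q :=
  Paths.lift { obj := fun _ => ModuleCat.of k k, map := fun _ => ModuleCat.ofHom LinearMap.id }

variable (Q) in
/-- The prefunctor underlying the simple representation `S_a`. -/
noncomputable def simplePre (a : Q) : Q ⥤q ModuleCat.{0} k where
  obj x := ModuleCat.of k (PLift (x = a) → k)
  map _ := 0

variable (Q) in
/-- The simple representation `S_a` concentrated at the vertex `a`. -/
noncomputable def simpleRep (a : Q) : RepQ k Q := Paths.lift (simplePre k Q a)

/-- The representation `M ⊗_k V` obtained by tensoring vertexwise with a `k`-space `V`. -/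
noncomputable def tensorRep (M : RepQ k Q) (V : ModuleCat.{0} k) : RepQ k Q :=
  M ⋙ MonoidalCategory.tensorRight V

open Classical in
/-- Auxiliary linear map used to define restrictions of representations. -/
noncomputable def piCondMap {A B : Type} [AddCommGroup A] [Module k A] [AddCommGroup B]
    [Module k B] (φ : A →ₗ[k] B) (P P' : Prop) : (PLift P → A) →ₗ[k] (PLift P' → B) where
  toFun f _ := if h : P then φ (f ⟨h⟩) else 0
  map_add' f g := by funext _; dsimp; split <;> simp
  map_smul' c f := by funext _; dsimp; split <;> simp

variable (Q) in
/-- The prefunctor underlying the restriction of `M` to the full subquiver generated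
by a set `S` of vertices. -/
noncomputable def restrictPre (M : RepQ k Q) (S : Set Q) : Q ⥤q ModuleCat.{0} k where
  obj x := ModuleCat.of k (PLift (x ∈ S) → M.obj (vtx x))
  map {x y} e := ModuleCat.ofHom (piCondMap k (M.map (arr e)).hom (x ∈ S) (y ∈ S))

variable (Q) in
/-- The restriction `M_S` of a representation `M` to the full subquiver generated by a
set `S` of vertices: the value at `x ∈ S` is `M(x)`, the value elsewhere is `0`, arrows
with both ends in `S` act as in `M` and the other arrows act as zero. -/
noncomputable def restrictRep (M : RepQ k Q) (S : Set Q) : RepQ k Q :=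
  Paths.lift (restrictPre k Q M S)

variable (Q) in
/-- The restriction `f_S` of a morphism of representations to the full subquiver
generated by a set `S` of vertices. -/
noncomputable def restrictHom {M N : RepQ k Q} (f : M ⟶ N) (S : Set Q) :
    restrictRep k Q M S ⟶ restrictRep k Q N S :=
  liftNatTrans (fun x => ModuleCat.ofHom (LinearMap.compLeft (f.app (vtx x)).hom (PLift (x ∈ S)))) (by
    intro x y e
    ext g
    funext hy
    show (LinearMap.compLeft (f.app (vtx y)).hom (PLift (y ∈ S)))
        (piCondMap k (M.map (arr e)).hom (x ∈ S) (y ∈ S) g) hy =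
      (piCondMap k (N.map (arr e)).hom (x ∈ S) (y ∈ S))
        (LinearMap.compLeft (f.app (vtx x)).hom (PLift (x ∈ S)) g) hy
    by_cases hx : x ∈ S
    · simp only [piCondMap, LinearMap.compLeft, LinearMap.coe_mk, AddHom.coe_mk, dif_pos hx]
      exact congrArg (fun φ => φ.hom (g ⟨hx⟩)) (f.naturality (arr e))
    · simp [piCondMap, LinearMap.compLeft, dif_neg hx]
      exact map_zero (f.app (vtx y)).hom)

variable (Q) in
/-- A subrepresentation of a representation, given by a family of subspaces stable
under the arrow maps. -/
structure SubRep (M : RepQ k Q) : Type where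
  carrier : ∀ x : Q, Submodule k (M.obj (vtx x))
  stable : ∀ {x y : Q} (e : x ⟶ y) (v : M.obj (vtx x)),
    v ∈ carrier x → M.map (arr e) v ∈ carrier y

variable (Q) in
/-- The socle of `M` at a vertex: the intersection of the kernels of the maps
associated to the arrows starting there. -/
def socle (M : RepQ k Q) (x : Q) : Submodule k (M.obj (vtx x)) :=
  ⨅ (y : Q) (e : x ⟶ y), LinearMap.ker (M.map (arr e)).hom

variable (Q) in
/-- The radical of `M` at a vertex: the sum of the images of the maps associated to the
arrows ending there. -/
def radical (M : RepQ k Q) (x : Q) : Submodule k (M.obj (vtx x)) :=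
  ⨆ (y : Q) (e : y ⟶ x), LinearMap.range (M.map (arr e)).hom

variable (Q) in
/-- The support of a representation: the set of vertices with nonzero value. -/
def suppR (M : RepQ k Q) : Set Q := {x : Q | Nontrivial (M.obj (vtx x))}

variable (Q) in
/-- A representation is locally finite dimensional if all its vertex spaces are
finite dimensional; these form the category `rep(Q)`. -/
def LocFinDim (M : RepQ k Q) : Prop := ∀ x : Q, FiniteDimensional k (M.obj (vtx x))

variable (Q) in
/-- A representation is finite dimensional if the total dimension `Σ_x dim M(x)` is finite,
i.e. it is locally finite dimensional with finite support. -/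
def FinDimRep (M : RepQ k Q) : Prop := (suppR k Q M).Finite ∧ LocFinDim k Q M

variable (Q) in
/-- The socle of `M` is an essential subrepresentation of `M`. -/
def SocleEssential (M : RepQ k Q) : Prop :=
  ∀ N : SubRep k Q M, (∃ x, N.carrier x ≠ ⊥) → ∃ x, N.carrier x ⊓ socle k Q M x ≠ ⊥

variable (Q) in
/-- The socle of `M` is finitely supported. -/
def SocleFinSupported (M : RepQ k Q) : Prop := {x : Q | socle k Q M x ≠ ⊥}.Finite

variable (Q) in
/-- The radical of `M` is a superfluous subrepresentation of `M`,
i.e. the top of `M` is essential over `M`. -/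
def TopEssential (M : RepQ k Q) : Prop :=
  ∀ N : SubRep k Q M, (∀ x, N.carrier x ⊔ radical k Q M x = ⊤) → ∀ x, N.carrier x = ⊤

variable (Q) in
/-- The top of `M` is finitely supported. -/
def TopFinSupported (M : RepQ k Q) : Prop := {x : Q | radical k Q M x ≠ ⊤}.Finite

variable (Q) in
/-- Membership in `Inj(Q)`: the full additive subcategory of `Rep(Q)` generated by the
representations `I_a ⊗ V` with `a` a vertex and `V` a `k`-space. -/
def MemInj (M : RepQ k Q) : Prop :=
  ∃ (n : ℕ) (a : Fin n → Q) (V : Fin n → ModuleCat.{0} k),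
    Nonempty (M ≅ ⨁ (fun i => tensorRep k (injRep k Q (a i)) (V i)))

variable (Q) in
/-- Membership in `Proj(Q)`: the full additive subcategory of `Rep(Q)` generated by the
representations `P_a ⊗ V` with `a` a vertex and `V` a `k`-space. -/
def MemProj (M : RepQ k Q) : Prop :=
  ∃ (n : ℕ) (a : Fin n → Q) (V : Fin n → ModuleCat.{0} k),
    Nonempty (M ≅ ⨁ (fun i => tensorRep k (projRep k Q (a i)) (V i)))

variable (Q) in
/-- Membership in `inj(Q)`: the locally finite dimensional representations in `Inj(Q)`. -/
def MemInjL (M : RepQ k Q) : Prop := MemInj k Q M ∧ LocFinDim k Q M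

variable (Q) in
/-- Membership in `proj(Q)`: the locally finite dimensional representations in `Proj(Q)`. -/
def MemProjL (M : RepQ k Q) : Prop := MemProj k Q M ∧ LocFinDim k Q M

variable (Q) in
/-- A representation is almost finitely presented if it admits a projective resolution
`0 → P₁ → P₀ → M → 0` with `P₀, P₁ ∈ Proj(Q)`. -/
def AlmostFinPresented (M : RepQ k Q) : Prop :=
  ∃ (P₁ P₀ : RepQ k Q) (f : P₁ ⟶ P₀) (g : P₀ ⟶ M) (w : f ≫ g = 0),
    MemProj k Q P₁ ∧ MemProj k Q P₀ ∧ (ShortComplex.mk f g w).ShortExact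

variable (Q) in
/-- A representation is almost finitely co-presented if it admits an injective
co-resolution `0 → M → I₀ → I₁ → 0` with `I₀, I₁ ∈ Inj(Q)`. -/
def AlmostFinCopresented (M : RepQ k Q) : Prop :=
  ∃ (I₀ I₁ : RepQ k Q) (f : M ⟶ I₀) (g : I₀ ⟶ I₁) (w : f ≫ g = 0),
    MemInj k Q I₀ ∧ MemInj k Q I₁ ∧ (ShortComplex.mk f g w).ShortExact

variable (Q) in
/-- A representation is finitely presented if it admits a projective resolution
`0 → P₁ → P₀ → M → 0` with `P₀, P₁ ∈ proj(Q)`; these form the category `rep^+(Q)`. -/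
def FinPresented (M : RepQ k Q) : Prop :=
  ∃ (P₁ P₀ : RepQ k Q) (f : P₁ ⟶ P₀) (g : P₀ ⟶ M) (w : f ≫ g = 0),
    MemProjL k Q P₁ ∧ MemProjL k Q P₀ ∧ (ShortComplex.mk f g w).ShortExact

variable (Q) in
/-- A representation is finitely co-presented if it admits an injective co-resolution
`0 → M → I₀ → I₁ → 0` with `I₀, I₁ ∈ inj(Q)`; these form the category `rep^-(Q)`. -/
def FinCopresented (M : RepQ k Q) : Prop :=
  ∃ (I₀ I₁ : RepQ k Q) (f : M ⟶ I₀) (g : I₀ ⟶ I₁) (w : f ≫ g = 0),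
    MemInjL k Q I₀ ∧ MemInjL k Q I₁ ∧ (ShortComplex.mk f g w).ShortExact

variable (Q) in
/-- A right infinite path with all vertices in `S`. -/
def HasRightInfPathIn (S : Set Q) : Prop :=
  ∃ (p : ℕ → Q) (_ : ∀ n, p n ⟶ p (n + 1)), ∀ n, p n ∈ S

variable (Q) in
/-- A left infinite path with all vertices in `S`. -/
def HasLeftInfPathIn (S : Set Q) : Prop :=
  ∃ (p : ℕ → Q) (_ : ∀ n, p (n + 1) ⟶ p n), ∀ n, p n ∈ S

/-- The list of vertices visited by a path. -/
def pathVerts {V : Type*} [Quiver V] {x : V} : ∀ {y : V}, Quiver.Path x y → List V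
  | _, Quiver.Path.nil => [x]
  | y, Quiver.Path.cons p _ => pathVerts p ++ [y]

variable (Q) in
/-- The full subquiver generated by `S` is socle-finite: every vertex of `S` is a
predecessor (within `S`) of one of finitely many fixed vertices. -/
def SetSocleFinite (S : Set Q) : Prop :=
  ∃ T : Finset Q, ∀ x ∈ S, ∃ t ∈ T, ∃ p : Quiver.Path x t, ∀ z ∈ pathVerts p, z ∈ S

variable (Q) in
/-- The full subquiver generated by `S` is top-finite: every vertex of `S` is a
successor (within `S`) of one of finitely many fixed vertices. -/
def SetTopFinite (S : Set Q) : Prop :=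
  ∃ T : Finset Q, ∀ x ∈ S, ∃ t ∈ T, ∃ p : Quiver.Path t x, ∀ z ∈ pathVerts p, z ∈ S

section AlmostSplit

universe uD vD
variable {C : Type uD} [Category.{vD} C]

/-- A morphism is a section if it admits a left inverse. -/
def IsSect {X Y : C} (f : X ⟶ Y) : Prop := ∃ r : Y ⟶ X, f ≫ r = 𝟙 X

/-- A morphism is a retraction if it admits a right inverse. -/
def IsRetr {X Y : C} (f : X ⟶ Y) : Prop := ∃ s : Y ⟶ X, s ≫ f = 𝟙 Y

/-- A morphism `g : Y ⟶ Z` is right almost split relative to the object class `P` if it is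
not a retraction and every non-retraction `h : W ⟶ Z` with `W` in `P` factors through `g`. -/
def RightAS (P : C → Prop) {Y Z : C} (g : Y ⟶ Z) : Prop :=
  ¬ IsRetr g ∧ ∀ ⦃W : C⦄, P W → ∀ h : W ⟶ Z, ¬ IsRetr h → ∃ u : W ⟶ Y, u ≫ g = h

/-- A morphism `f : X ⟶ Y` is left almost split relative to the object class `P` if it is
not a section and every non-section `h : X ⟶ W` with `W` in `P` factors through `f`. -/
def LeftAS (P : C → Prop) {X Y : C} (f : X ⟶ Y) : Prop :=
  ¬ IsSect f ∧ ∀ ⦃W : C⦄, P W → ∀ h : X ⟶ W, ¬ IsSect h → ∃ u : Y ⟶ W, f ≫ u = h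

/-- A morphism `g : Y ⟶ Z` is right minimal. -/
def RightMin {Y Z : C} (g : Y ⟶ Z) : Prop := ∀ u : Y ⟶ Y, u ≫ g = g → IsIso u

/-- A morphism `f : X ⟶ Y` is left minimal. -/
def LeftMin {X Y : C} (f : X ⟶ Y) : Prop := ∀ u : Y ⟶ Y, f ≫ u = f → IsIso u

/-- Minimal right almost split relative to the object class `P`. -/
def MinRightAS (P : C → Prop) {Y Z : C} (g : Y ⟶ Z) : Prop := RightAS P g ∧ RightMin g

/-- Minimal left almost split relative to the object class `P`. -/
def MinLeftAS (P : C → Prop) {X Y : C} (f : X ⟶ Y) : Prop := LeftAS P f ∧ LeftMin f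

/-- An object is indecomposable if it is nonzero and its only idempotent endomorphisms
are `0` and the identity (equivalently, it is not a direct sum of two nonzero objects). -/
def Indec [Limits.HasZeroMorphisms C] (X : C) : Prop :=
  ¬ Limits.IsZero X ∧ ∀ e : X ⟶ X, e ≫ e = e → e = 0 ∨ e = 𝟙 X

/-- A morphism is irreducible relative to the object class `P` if it is neither a section
nor a retraction while in any factorization through an object of `P` the first factor is a
section or the second factor is a retraction. -/
def IrredOn (P : C → Prop) {X Y : C} (f : X ⟶ Y) : Prop :=
  ¬ IsSect f ∧ ¬ IsRetr f ∧
    ∀ ⦃Z : C⦄, P Z → ∀ (g : X ⟶ Z) (h : Z ⟶ Y), g ≫ h = f → IsSect g ∨ IsRetr h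

/-- An object `M` is projective relative to the object class `P`: any morphism from `M` to
the codomain of an epimorphism between objects of `P` lifts. -/
def ProjOn (P : C → Prop) (M : C) : Prop :=
  ∀ ⦃A B : C⦄, P A → P B → ∀ (g : A ⟶ B), Epi g → ∀ h : M ⟶ B, ∃ l : M ⟶ A, l ≫ g = h

/-- An object `M` is injective relative to the object class `P`: any morphism to `M` from
the domain of a monomorphism between objects of `P` extends. -/
def InjOn (P : C → Prop) (M : C) : Prop :=
  ∀ ⦃A B : C⦄, P A → P B → ∀ (g : A ⟶ B), Mono g → ∀ h : A ⟶ M, ∃ l : B ⟶ M, g ≫ l = h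

/-- An essential monomorphism, relative to the object class `P`. -/
def EssMonoOn (P : C → Prop) {X Y : C} (f : X ⟶ Y) : Prop :=
  Mono f ∧ ∀ ⦃W : C⦄, P W → ∀ g : Y ⟶ W, Mono (f ≫ g) → Mono g

/-- A superfluous epimorphism, relative to the object class `P`. -/
def SupEpiOn (P : C → Prop) {X Y : C} (f : X ⟶ Y) : Prop :=
  Epi f ∧ ∀ ⦃W : C⦄, P W → ∀ g : W ⟶ X, Epi (g ≫ f) → Epi g

end AlmostSplit

/-- An almost split (Auslander-Reiten) sequence, relative to the object class `P` in an
ambient abelian category: a short exact sequence with terms in `P` whose left map is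
minimal left almost split and whose right map is minimal right almost split relative
to `P`. -/
def IsASSeqOn {C : Type uC} [Category.{vC} C] [Abelian C] (P : C → Prop)
    (S : ShortComplex C) : Prop :=
  S.ShortExact ∧ P S.X₁ ∧ P S.X₂ ∧ P S.X₃ ∧ MinLeftAS P S.f ∧ MinRightAS P S.g

variable (Q) in
/-- The morphism `P_y ⟶ P_x` determined by a path `p` from `x` to `y`
(composition with `p`). -/
noncomputable def projPathTrans {x y : Q} (p : Quiver.Path x y) :
    projRep k Q y ⟶ projRep k Q x :=
  liftNatTrans (fun z => ModuleCat.ofHom (Finsupp.lmapDomain k k (fun ρ : Quiver.Path y z => p.comp ρ))) (by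
    intro z w e
    apply ModuleCat.hom_ext
    show (Finsupp.lmapDomain k k _).comp (Finsupp.lmapDomain k k _) =
      (Finsupp.lmapDomain k k _).comp (Finsupp.lmapDomain k k _)
    rw [← Finsupp.lmapDomain_comp, ← Finsupp.lmapDomain_comp]
    rfl)

variable (Q) in
/-- The morphism `I_y ⟶ I_x` determined by a path `p` from `x` to `y`. -/
noncomputable def injPathTrans {x y : Q} (p : Quiver.Path x y) :
    injRep k Q y ⟶ injRep k Q x :=
  liftNatTrans (fun z => ModuleCat.ofHom (LinearMap.funLeft k k (fun σ : Quiver.Path z x => σ.comp p))) (by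
    intro z w e
    ext h
    funext σ
    show h ((Quiver.Hom.toPath e).comp (σ.comp p)) = h (((Quiver.Hom.toPath e).comp σ).comp p)
    rw [Quiver.Path.comp_assoc] <;> try rfl)

variable (Q) in
/-- The linear combination of path morphisms `P_y ⟶ P_x` determined by an element of the
span of the paths from `x` to `y`. -/
noncomputable def projCombTrans {x y : Q} (c : Quiver.Path x y →₀ k) :
    projRep k Q y ⟶ projRep k Q x :=
  c.sum (fun p cp => cp • projPathTrans k Q p)

variable (Q) in
/-- The linear combination of path morphisms `I_y ⟶ I_x` determined by an element of the
span of the paths from `x` to `y`. -/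
noncomputable def injCombTrans {x y : Q} (c : Quiver.Path x y →₀ k) :
    injRep k Q y ⟶ injRep k Q x :=
  c.sum (fun p cp => cp • injPathTrans k Q p)

variable (Q) in
/-- Evaluation of a morphism `P_y ⟶ P_x` on the trivial path, yielding an element of the
span of the paths from `x` to `y`. -/
noncomputable def evalProjHom {x y : Q} (u : projRep k Q y ⟶ projRep k Q x) :
    Quiver.Path x y →₀ k :=
  u.app (vtx y) (Finsupp.single Quiver.Path.nil 1)

open Classical in
variable (Q) in
/-- Evaluation of a morphism `I_y ⟶ I_x`, yielding an element of the span of the paths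
from `x` to `y` (here `Q` is interval-finite). -/
noncomputable def evalInjHom (hfin : ∀ x y : Q, Finite (Quiver.Path x y)) {x y : Q}
    (u : injRep k Q y ⟶ injRep k Q x) : Quiver.Path x y →₀ k :=
  haveI := hfin x y
  Finsupp.equivFunOnFinite.symm (fun p => u.app (vtx x) (Pi.single p 1) Quiver.Path.nil)

variable (Q) in
/-- The Nakayama functor `ν` applied to a morphism between objects of `proj(Q)` written as
finite direct sums of representations `P_a`; the value is the corresponding morphism between
the direct sums of the representations `I_a`. -/
noncomputable def nuMap {r s : ℕ} (xv : Fin r → Q) (yv : Fin s → Q)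
    (f : (⨁ fun j => projRep k Q (yv j)) ⟶ (⨁ fun i => projRep k Q (xv i))) :
    (⨁ fun j => injRep k Q (yv j)) ⟶ (⨁ fun i => injRep k Q (xv i)) :=
  biproduct.matrix fun j i =>
    injCombTrans k Q (evalProjHom k Q
      (biproduct.ι (fun j => projRep k Q (yv j)) j ≫ f ≫ biproduct.π (fun i => projRep k Q (xv i)) i))

variable (Q) in
/-- The inverse Nakayama functor `ν⁻` applied to a morphism between objects of `inj(Q)`
written as finite direct sums of representations `I_a`. -/
noncomputable def nuInvMap (hfin : ∀ x y : Q, Finite (Quiver.Path x y)) {r s : ℕ}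
    (xv : Fin r → Q) (yv : Fin s → Q)
    (g : (⨁ fun i => injRep k Q (xv i)) ⟶ (⨁ fun j => injRep k Q (yv j))) :
    (⨁ fun i => projRep k Q (xv i)) ⟶ (⨁ fun j => projRep k Q (yv j)) :=
  biproduct.matrix fun i j =>
    projCombTrans k Q (evalInjHom k Q hfin
      (biproduct.ι (fun i => injRep k Q (xv i)) i ≫ g ≫ biproduct.π (fun j => injRep k Q (yv j)) j))

variable (Q) in
/-- `0 → ⊕_j P_{y_j} → ⊕_i P_{x_i} → M → 0` is a minimal projective resolution:
a short exact sequence in which the two epimorphisms onto `M` and onto the kernel of `ε`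
are projective covers (superfluous epimorphisms). -/
structure IsMinProjRes (M : RepQ k Q) {r s : ℕ} (xv : Fin r → Q) (yv : Fin s → Q)
    (f : (⨁ fun j => projRep k Q (yv j)) ⟶ (⨁ fun i => projRep k Q (xv i)))
    (ε : (⨁ fun i => projRep k Q (xv i)) ⟶ M) : Prop where
  w : f ≫ ε = 0
  shortExact : (ShortComplex.mk f ε w).ShortExact
  superfluous_ε : SupEpiOn (fun _ => True) ε
  superfluous_f : SupEpiOn (fun _ => True) (kernel.lift ε f w)

variable (Q) in
/-- `0 → M → ⊕_i I_{x_i} → ⊕_j I_{y_j} → 0` is a minimal injective co-resolution: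
a short exact sequence in which the two monomorphisms from `M` and from the cokernel of `ι`
are injective hulls (essential monomorphisms). -/
structure IsMinInjCores (M : RepQ k Q) {r s : ℕ} (xv : Fin r → Q) (yv : Fin s → Q)
    (ι : M ⟶ (⨁ fun i => injRep k Q (xv i)))
    (g : (⨁ fun i => injRep k Q (xv i)) ⟶ (⨁ fun j => injRep k Q (yv j))) : Prop where
  w : ι ≫ g = 0
  shortExact : (ShortComplex.mk ι g w).ShortExact
  essential_ι : EssMonoOn (fun _ => True) ι
  essential_g : EssMonoOn (fun _ => True) (cokernel.desc ι g w)

variable (Q) in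
/-- `N` is an Auslander-Reiten translate `DTr M` of `M`: for some minimal projective
resolution `0 → P₁ → P₀ → M → 0` by finite direct sums of representations `P_a`,
the representation `N` is isomorphic to the kernel of `ν(f) : ν(P₁) ⟶ ν(P₀)`. -/
def IsDTrOf (N M : RepQ k Q) : Prop :=
  ∃ (r s : ℕ) (xv : Fin r → Q) (yv : Fin s → Q)
    (f : (⨁ fun j => projRep k Q (yv j)) ⟶ (⨁ fun i => projRep k Q (xv i)))
    (ε : (⨁ fun i => projRep k Q (xv i)) ⟶ M),
      IsMinProjRes k Q M xv yv f ε ∧ Nonempty (N ≅ kernel (nuMap k Q xv yv f))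

variable (Q) in
/-- `N` is an inverse Auslander-Reiten translate `TrD M` of `M`: for some minimal
injective co-resolution `0 → M → I₀ → I₁ → 0` by finite direct sums of representations
`I_a`, the representation `N` is isomorphic to the cokernel of `ν⁻(g) : ν⁻(I₀) ⟶ ν⁻(I₁)`. -/
def IsTrDOf (hfin : ∀ x y : Q, Finite (Quiver.Path x y)) (N M : RepQ k Q) : Prop :=
  ∃ (r s : ℕ) (xv : Fin r → Q) (yv : Fin s → Q)
    (ι : M ⟶ (⨁ fun i => injRep k Q (xv i)))
    (g : (⨁ fun i => injRep k Q (xv i)) ⟶ (⨁ fun j => injRep k Q (yv j))),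
      IsMinInjCores k Q M xv yv ι g ∧ Nonempty (N ≅ cokernel (nuInvMap k Q hfin xv yv g))

variable (Q) in
/-- `N ≅ DTr^n M`, where in particular all the intermediate translates are defined. -/
def IsDTrPow : ℕ → RepQ k Q → RepQ k Q → Prop
  | 0, N, M => Nonempty (N ≅ M)
  | n + 1, N, M => ∃ L : RepQ k Q, IsDTrPow n L M ∧ IsDTrOf k Q N L

variable (Q) in
/-- The quiver `Q` is connected: any two vertices are joined by a walk. -/
def QConnected : Prop :=
  ∀ x y : Q, Nonempty (Quiver.Path (a := (x : Quiver.Symmetrify Q)) (y : Quiver.Symmetrify Q))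
namespace Aux

variable {V : Type*} [Quiver V]

lemma start_mem_pathVerts {x y : V} (p : Quiver.Path x y) : x ∈ pathVerts p := by
  induction p with
  | nil => simp [pathVerts]
  | cons p e ih => simp [pathVerts, ih]

lemma end_mem_pathVerts {x y : V} (p : Quiver.Path x y) : y ∈ pathVerts p := by
  cases p with
  | nil => simp [pathVerts]
  | cons p e => simp [pathVerts]

lemma pathVerts_toPath_comp {x w y : V} (e : x ⟶ w) (q : Quiver.Path w y) :
    pathVerts (Quiver.Path.comp (Quiver.Hom.toPath e) q) = x :: pathVerts q := by
  induction q with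
  | nil => simp [pathVerts, Quiver.Hom.toPath]
  | cons q f ih => rw [Quiver.Path.comp_cons]; simp [pathVerts, ih]

lemma length_ne_zero_of_ne {x y : V} (p : Quiver.Path x y) (h : y ≠ x) : p.length ≠ 0 := by
  cases p with
  | nil => exact absurd rfl h
  | cons p e => simp

lemma front_dec {x y : V} (p : Quiver.Path x y) (h : p.length ≠ 0) :
    ∃ (w : V) (e : x ⟶ w) (q : Quiver.Path w y), pathVerts p = x :: pathVerts q := by
  obtain ⟨n, hn⟩ : ∃ n, p.length = n + 1 := ⟨p.length - 1, (Nat.succ_pred_eq_of_pos (Nat.pos_of_ne_zero h)).symm⟩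
  obtain ⟨w, e, q, _, rfl⟩ := p.eq_toPath_comp_of_length_eq_succ hn
  exact ⟨w, e, q, pathVerts_toPath_comp e q⟩

lemma last_dec {x y : V} (p : Quiver.Path x y) (h : p.length ≠ 0) :
    ∃ (w : V) (q : Quiver.Path x w) (e : w ⟶ y), pathVerts p = pathVerts q ++ [y] := by
  cases p with
  | nil => simp at h
  | cons q e => exact ⟨_, q, e, rfl⟩

lemma mem_dec {a z : V} : ∀ {x : V} (p : Quiver.Path a x), z ∈ pathVerts p →
    ∃ (r : Quiver.Path a z) (s : Quiver.Path z x), p = r.comp s := by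
  intro x p
  induction p with
  | nil =>
    intro hz
    simp [pathVerts] at hz
    subst hz
    exact ⟨Quiver.Path.nil, Quiver.Path.nil, rfl⟩
  | cons p e ih =>
    intro hz
    simp [pathVerts] at hz
    rcases hz with hz | hz
    · obtain ⟨r, s, rfl⟩ := ih hz
      exact ⟨r, s.cons e, by simp⟩
    · subst hz
      exact ⟨p.cons e, Quiver.Path.nil, by simp⟩

/-- sequence construction -/
lemma exists_seq {α : Type*} (G : α → Prop) (R : α → α → Prop) (h0 : ∃ a, G a)
    (hstep : ∀ a, G a → ∃ b, G b ∧ R a b) :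
    ∃ p : ℕ → α, (∀ n, R (p n) (p (n + 1))) ∧ ∀ n, G (p n) := by
  obtain ⟨a0, ha0⟩ := h0
  have step : ∀ a : {a : α // G a}, ∃ b : {a : α // G a}, R a.1 b.1 := by
    rintro ⟨a, ha⟩
    obtain ⟨b, hb, hr⟩ := hstep a ha
    exact ⟨⟨b, hb⟩, hr⟩
  choose next hnext using step
  refine ⟨fun n => (next^[n] ⟨a0, ha0⟩).1, fun n => ?_, fun n => (next^[n] ⟨a0, ha0⟩).2⟩
  show R (next^[n] ⟨a0, ha0⟩).1 (next^[n+1] ⟨a0, ha0⟩).1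
  rw [Function.iterate_succ_apply']
  exact hnext _

end Aux

namespace Aux

variable {V : Type*} [Quiver V]

/-- Vertices reachable from `v` within `S`. -/
def reach (S : Set V) (v : V) : Set V :=
  {x | ∃ p : Quiver.Path v x, ∀ z ∈ pathVerts p, z ∈ S}

/-- Vertices from which `v` is reachable within `S`. -/
def coreach (S : Set V) (v : V) : Set V :=
  {x | ∃ p : Quiver.Path x v, ∀ z ∈ pathVerts p, z ∈ S}

lemma mem_of_reach_nonempty {S : Set V} {v : V} (h : (reach S v).Nonempty) : v ∈ S := by
  obtain ⟨x, p, hp⟩ := h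
  exact hp v (start_mem_pathVerts p)

lemma mem_of_coreach_nonempty {S : Set V} {v : V} (h : (coreach S v).Nonempty) : v ∈ S := by
  obtain ⟨x, p, hp⟩ := h
  exact hp v (end_mem_pathVerts p)

lemma konig_right (hout : ∀ x : V, Finite (Σ y : V, x ⟶ y)) (S : Set V) (hinf : S.Infinite)
    (T : Finset V)
    (hcov : ∀ x ∈ S, ∃ t ∈ T, ∃ p : Quiver.Path t x, ∀ z ∈ pathVerts p, z ∈ S) :
    ∃ (p : ℕ → V) (_ : ∀ n, p n ⟶ p (n + 1)), ∀ n, p n ∈ S := by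
  set G : V → Prop := fun v => (reach S v).Infinite with hG
  have h0 : ∃ v, G v := by
    by_contra h
    push_neg at h
    simp only [hG, Set.not_infinite] at h
    have hsub : S ⊆ ⋃ t ∈ T, reach S t := by
      intro x hx
      obtain ⟨t, ht, p, hp⟩ := hcov x hx
      exact Set.mem_biUnion ht ⟨p, hp⟩
    exact hinf (Set.Finite.subset (T.finite_toSet.biUnion fun t _ => h t) hsub)
  have hstep : ∀ v, G v → ∃ w, G w ∧ Nonempty (v ⟶ w) := by
    intro v hv
    haveI := hout v
    have h1 : (reach S v \ {v}).Infinite := hv.diff (Set.finite_singleton v)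
    have h2 : reach S v \ {v} ⊆ ⋃ σ : Σ w : V, v ⟶ w, reach S σ.1 := by
      rintro x ⟨⟨p, hp⟩, hxv⟩
      have hx : x ≠ v := hxv
      obtain ⟨w, e, q, hverts⟩ := front_dec p (length_ne_zero_of_ne p hx)
      refine Set.mem_iUnion.2 ⟨⟨w, e⟩, q, fun z hz => hp z ?_⟩
      rw [hverts]
      exact List.mem_cons_of_mem _ hz
    by_contra h
    push_neg at h
    have hfin : ∀ σ : Σ w : V, v ⟶ w, (reach S σ.1).Finite := by
      intro σ
      rw [← Set.not_infinite]
      intro hσ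
      exact (h σ.1 hσ).false σ.2
    exact h1 (Set.Finite.subset (Set.finite_iUnion hfin) h2)
  obtain ⟨p, hR, hGp⟩ := exists_seq G (fun a b => Nonempty (a ⟶ b)) h0 hstep
  exact ⟨p, fun n => (hR n).some, fun n =>
    mem_of_reach_nonempty ((hGp n).nonempty)⟩

lemma konig_left (hin : ∀ y : V, Finite (Σ x : V, x ⟶ y)) (S : Set V) (hinf : S.Infinite)
    (T : Finset V)
    (hcov : ∀ x ∈ S, ∃ t ∈ T, ∃ p : Quiver.Path x t, ∀ z ∈ pathVerts p, z ∈ S) :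
    ∃ (p : ℕ → V) (_ : ∀ n, p (n + 1) ⟶ p n), ∀ n, p n ∈ S := by
  set G : V → Prop := fun v => (coreach S v).Infinite with hG
  have h0 : ∃ v, G v := by
    by_contra h
    push_neg at h
    simp only [hG, Set.not_infinite] at h
    have hsub : S ⊆ ⋃ t ∈ T, coreach S t := by
      intro x hx
      obtain ⟨t, ht, p, hp⟩ := hcov x hx
      exact Set.mem_biUnion ht ⟨p, hp⟩
    exact hinf (Set.Finite.subset (T.finite_toSet.biUnion fun t _ => h t) hsub)
  have hstep : ∀ v, G v → ∃ w, G w ∧ Nonempty (w ⟶ v) := by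
    intro v hv
    haveI := hin v
    have h1 : (coreach S v \ {v}).Infinite := hv.diff (Set.finite_singleton v)
    have h2 : coreach S v \ {v} ⊆ ⋃ σ : Σ w : V, w ⟶ v, coreach S σ.1 := by
      rintro x ⟨⟨p, hp⟩, hxv⟩
      have hx : v ≠ x := fun h => hxv h.symm
      obtain ⟨w, q, e, hverts⟩ := last_dec p (length_ne_zero_of_ne p hx)
      refine Set.mem_iUnion.2 ⟨⟨w, e⟩, q, fun z hz => hp z ?_⟩
      rw [hverts]
      exact List.mem_append_left _ hz
    by_contra h
    push_neg at h
    have hfin : ∀ σ : Σ w : V, w ⟶ v, (coreach S σ.1).Finite := by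
      intro σ
      rw [← Set.not_infinite]
      intro hσ
      exact (h σ.1 hσ).false σ.2
    exact h1 (Set.Finite.subset (Set.finite_iUnion hfin) h2)
  obtain ⟨p, hR, hGp⟩ := exists_seq G (fun a b => Nonempty (b ⟶ a)) h0 hstep
  exact ⟨p, fun n => (hR n).some, fun n =>
    mem_of_coreach_nonempty ((hGp n).nonempty)⟩

end Aux


section RepAux

variable {k : Type} [Field k] {Q : Type} [Quiver.{0} Q]

lemma pth_nil (x : Q) : pth (Quiver.Path.nil : Quiver.Path x x) = 𝟙 (vtx x) := rfl

lemma projRep_map_single (a : Q) {x y : Q} (p : Quiver.Path x y) (q : Quiver.Path a x) (c : k) :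
    (projRep k Q a).map (pth p) (Finsupp.single q c) = Finsupp.single (q.comp p) c := by
  induction p with
  | nil =>
    rw [pth_nil, CategoryTheory.Functor.map_id]
    simp
    rfl
  | cons p e ih =>
    show (Paths.lift (projPre k Q a)).map ((pth p).cons e) _ = _
    rw [Paths.lift_cons]
    show (projPre k Q a).map e ((projRep k Q a).map (pth p) (Finsupp.single q c)) = _
    rw [ih]
    show Finsupp.lmapDomain k k _ _ = _
    simp [Finsupp.mapDomain_single]

lemma injRep_map_apply (a : Q) {x y : Q} (p : Quiver.Path x y) (g : Quiver.Path x a → k)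
    (σ : Quiver.Path y a) :
    (injRep k Q a).map (pth p) g σ = g (p.comp σ) := by
  induction p with
  | nil =>
    rw [pth_nil, CategoryTheory.Functor.map_id]
    simp
    rfl
  | cons p e ih =>
    show (Paths.lift (injPre k Q a)).map ((pth p).cons e) g σ = _
    rw [Paths.lift_cons]
    show (injRep k Q a).map (pth p) g ((Quiver.Hom.toPath e).comp σ) = _
    rw [ih]
    congr 1
    show p.comp (Quiver.Path.nil.cons e |>.comp σ) = (p.cons e).comp σ
    rw [← Quiver.Path.comp_assoc, Quiver.Path.comp_cons, Quiver.Path.comp_nil]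

open TensorProduct in
lemma exists_single_tmul_ne_zero {ι V W : Type} [DecidableEq ι] [AddCommGroup V] [Module k V]
    [AddCommGroup W] [Module k W]
    (T : ((ι →₀ k) ⊗[k] V) →ₗ[k] W) (w : (ι →₀ k) ⊗[k] V) (hw : T w ≠ 0) :
    ∃ (p : ι) (v : V), T (Finsupp.single p 1 ⊗ₜ[k] v) ≠ 0 := by
  by_contra hc
  push_neg at hc
  apply hw
  have hwe : w = (TensorProduct.finsuppScalarLeft k V ι).symm
      (TensorProduct.finsuppScalarLeft k V ι w) := by simp
  rw [hwe, ← Finsupp.sum_single (TensorProduct.finsuppScalarLeft k V ι w),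
    map_finsuppSum, map_finsuppSum]
  refine Finset.sum_eq_zero fun i hi => ?_
  simp only [TensorProduct.finsuppScalarLeft_symm_apply_single]
  exact hc i _

open TensorProduct in
/-- Coordinates of elements of `(ι → k) ⊗ V` for `ι` finite. -/
noncomputable def tcoord (ι : Type) [Finite ι] [DecidableEq ι] (V : Type) [AddCommGroup V] [Module k V] :
    ((ι → k) ⊗[k] V) ≃ₗ[k] (ι →₀ V) :=
  (TensorProduct.congr (Finsupp.linearEquivFunOnFinite k k ι).symm
    (LinearEquiv.refl k V)).trans (TensorProduct.finsuppScalarLeft k V ι)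

open TensorProduct in
lemma tcoord_tmul {ι : Type} [Finite ι] [DecidableEq ι] {V : Type} [AddCommGroup V] [Module k V]
    (g : ι → k) (v : V) (p : ι) : tcoord (k := k) ι V (g ⊗ₜ[k] v) p = g p • v := by
  simp [tcoord, Finsupp.linearEquivFunOnFinite_symm_coe, Finsupp.coe_equivFunOnFinite_symm, Finsupp.linearEquivFunOnFinite]

open TensorProduct in
lemma exists_tcoord_ne_zero {ι : Type} [Finite ι] [DecidableEq ι] {V : Type} [AddCommGroup V] [Module k V]
    {w : (ι → k) ⊗[k] V} (hw : w ≠ 0) : ∃ p : ι, tcoord (k := k) ι V w p ≠ 0 := by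
  have : tcoord (k := k) ι V w ≠ 0 := by
    intro h
    exact hw ((tcoord (k := k) ι V).map_eq_zero_iff.1 h)
  obtain ⟨p, hp⟩ := Finsupp.ne_iff.1 this
  exact ⟨p, by simpa using hp⟩

open TensorProduct in
lemma tcoord_funLeft {ι ι' : Type} [Finite ι] [Finite ι'] [DecidableEq ι] [DecidableEq ι'] {V : Type} [AddCommGroup V]
    [Module k V] (f : ι' → ι) (w : (ι → k) ⊗[k] V) (p : ι') :
    tcoord (k := k) ι' V
      (TensorProduct.map (LinearMap.funLeft k k f) (LinearMap.id (M := V)) w) p =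
    tcoord (k := k) ι V w (f p) := by
  induction w with
  | zero => simp
  | tmul g v => simp [tcoord_tmul, LinearMap.funLeft_apply]
  | add w₁ w₂ h₁ h₂ => simp [map_add, h₁, h₂]

end RepAux

section RepAux2

variable {k : Type} [Field k] {Q : Type} [Quiver.{0} Q]

open TensorProduct in
lemma whisker_injRep_tcoord (a : Q) {x z : Q}
    [Finite (Quiver.Path x a)] [Finite (Quiver.Path z a)]
    [DecidableEq (Quiver.Path x a)] [DecidableEq (Quiver.Path z a)]
    (r : Quiver.Path x z) (V : ModuleCat.{0} k)
    (w : ↥(MonoidalCategory.tensorObj ((injRep k Q a).obj (vtx x)) V))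
    (s : Quiver.Path z a) :
    tcoord (k := k) (Quiver.Path z a) V
        ((MonoidalCategory.whiskerRight ((injRep k Q a).map (pth r)) V) w) s =
      tcoord (k := k) (Quiver.Path x a) V w (r.comp s) := by
  induction w using TensorProduct.induction_on with
  | zero => simp; erw [map_zero, map_zero]; rfl
  | tmul g v =>
    rw [ModuleCat.MonoidalCategory.whiskerRight_apply]
    erw [tcoord_tmul, tcoord_tmul]
    congr 1
    exact injRep_map_apply a r g s
  | add w₁ w₂ h₁ h₂ =>
    erw [map_add, map_add, map_add, Finsupp.add_apply, Finsupp.add_apply, h₁, h₂]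

end RepAux2

/-- Let `k` be a field, `Q` a strongly locally finite quiver and `M` an
infinite dimensional representation in `rep(Q)` (locally finite dimensional but not finite
dimensional). Then: (1) if `M` is finitely presented, then `supp M` contains a right
infinite path; (2) if `M` is finitely co-presented, then `supp M` contains a left infinite
path. -/
theorem statement_3 (k : Type) [Field k] (Q : Type) [Quiver.{0} Q]
    (hQ : StronglyLocallyFinite Q) (M : RepQ k Q) (hlfd : LocFinDim k Q M)
    (hinf : ¬ FinDimRep k Q M) :
    (FinPresented k Q M → HasRightInfPathIn Q (suppR k Q M)) ∧
    (FinCopresented k Q M → HasLeftInfPathIn Q (suppR k Q M)) := by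
  classical
  have hSinf : (suppR k Q M).Infinite := fun hfin => hinf ⟨hfin, hlfd⟩
  constructor
  · rintro ⟨P₁, P₀, f, g, w, hP₁, hP₀, hse⟩
    obtain ⟨n, a, V, ⟨iso⟩⟩ := hP₀.1
    have hepi' : Epi (iso.inv ≫ g) := by
      haveI : Epi (ShortComplex.mk f g w).g := hse.epi_g
      haveI : Epi g := this
      exact epi_comp _ _
    set g' : (⨁ fun i => tensorRep k (projRep k Q (a i)) (V i)) ⟶ M := iso.inv ≫ g with hg'
    have hsurj : ∀ x : Q, Function.Surjective (g'.app (vtx x)) := by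
      intro x
      haveI : Epi (g'.app (vtx x)) := (NatTrans.epi_iff_epi_app g').1 hepi' (vtx x)
      exact (ModuleCat.epi_iff_surjective _).1 this
    have hcov : ∀ x ∈ suppR k Q M, ∃ t ∈ Finset.univ.image a, ∃ p : Quiver.Path t x,
        ∀ z ∈ pathVerts p, z ∈ suppR k Q M := by
      intro x hx
      haveI : Nontrivial (M.obj (vtx x)) := hx
      obtain ⟨m, hm⟩ := exists_ne (0 : M.obj (vtx x))
      obtain ⟨u, hu⟩ := hsurj x m
      have htot : g' = ∑ i : Fin n, (biproduct.π _ i ≫ biproduct.ι _ i) ≫ g' := by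
        rw [← Preadditive.sum_comp, biproduct.total, Category.id_comp]
      have hex : ∃ i : Fin n,
          (biproduct.ι (fun i => tensorRep k (projRep k Q (a i)) (V i)) i ≫ g').app (vtx x)
            ((biproduct.π (fun i => tensorRep k (projRep k Q (a i)) (V i)) i).app (vtx x) u)
            ≠ 0 := by
        by_contra hc
        push_neg at hc
        apply hm
        rw [← hu]
        conv_lhs => rw [htot]
        rw [NatTrans.app_sum]
        simp only [ModuleCat.hom_sum, LinearMap.coe_sum]
        rw [Finset.sum_apply]
        refine Finset.sum_eq_zero fun i _ => ?_
        exact hc i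
      obtain ⟨i, hne⟩ := hex
      set h := biproduct.ι (fun i => tensorRep k (projRep k Q (a i)) (V i)) i ≫ g' with hh
      set T : TensorProduct k (Quiver.Path (a i) x →₀ k) ↥(V i) →ₗ[k] ↥(M.obj (vtx x)) :=
        (h.app (vtx x)).hom with hT
      have hne' : T ((biproduct.π (fun i => tensorRep k (projRep k Q (a i)) (V i)) i).app
          (vtx x) u) ≠ 0 := hne
      obtain ⟨p, v, hpv⟩ := exists_single_tmul_ne_zero T _ hne'
      have hkey : ∀ (q : Quiver.Path (a i) x) (v : ↥(V i)),
          T (Finsupp.single q (1:k) ⊗ₜ[k] v) =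
            M.map (pth q)
              (h.app (vtx (a i)) (Finsupp.single Quiver.Path.nil (1:k) ⊗ₜ[k] v)) := by
        intro q v
        rw [hT]
        have hnat := h.naturality (pth q)
        have h1 := LinearMap.congr_fun (congrArg ModuleCat.Hom.hom hnat)
          (Finsupp.single Quiver.Path.nil (1:k) ⊗ₜ[k] v)
        have hJ : (tensorRep k (projRep k Q (a i)) (V i)).map (pth q)
            (Finsupp.single Quiver.Path.nil (1:k) ⊗ₜ[k] v) =
            Finsupp.single q (1:k) ⊗ₜ[k] v := by
          show (MonoidalCategory.whiskerRight ((projRep k Q (a i)).map (pth q)) (V i)) _ = _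
          erw [ModuleCat.MonoidalCategory.whiskerRight_apply, projRep_map_single,
            Quiver.Path.nil_comp]
          rfl
        rw [← hJ]
        exact h1
      refine ⟨a i, Finset.mem_image_of_mem a (Finset.mem_univ i), p, ?_⟩
      intro z hz
      obtain ⟨r, s, rfl⟩ := Aux.mem_dec p hz
      have hcomp : M.map (pth (r.comp s)) = M.map (pth r) ≫ M.map (pth s) := M.map_comp _ _
      have hmz : M.map (pth r)
          (h.app (vtx (a i)) (Finsupp.single Quiver.Path.nil (1:k) ⊗ₜ[k] v)) ≠ 0 := by
        intro h0
        apply hpv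
        rw [hkey (r.comp s) v, hcomp]
        show M.map (pth s) (M.map (pth r) _) = 0
        rw [h0, map_zero]
      exact nontrivial_of_ne _ _ hmz
    obtain ⟨pfun, harr, hmem⟩ := Aux.konig_right hQ.1 _ hSinf (Finset.univ.image a) hcov
    exact ⟨pfun, harr, hmem⟩
  · rintro ⟨I₀, I₁, f, g, w, hI₀, hI₁, hse⟩
    obtain ⟨n, a, V, ⟨iso⟩⟩ := hI₀.1
    have hmono' : Mono (f ≫ iso.hom) := by
      haveI : Mono (ShortComplex.mk f g w).f := hse.mono_f
      haveI : Mono f := this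
      exact mono_comp _ _
    set f' : M ⟶ (⨁ fun i => tensorRep k (injRep k Q (a i)) (V i)) := f ≫ iso.hom with hf'
    have hinj : ∀ x : Q, Function.Injective (f'.app (vtx x)) := by
      intro x
      haveI : Mono (f'.app (vtx x)) := (NatTrans.mono_iff_mono_app f').1 hmono' (vtx x)
      exact (ModuleCat.mono_iff_injective _).1 this
    have hcov : ∀ x ∈ suppR k Q M, ∃ t ∈ Finset.univ.image a, ∃ p : Quiver.Path x t,
        ∀ z ∈ pathVerts p, z ∈ suppR k Q M := by
      intro x hx
      haveI : Nontrivial (M.obj (vtx x)) := hx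
      obtain ⟨m, hm⟩ := exists_ne (0 : M.obj (vtx x))
      have hfm : f'.app (vtx x) m ≠ 0 := by
        intro h0
        exact hm (hinj x (by rw [h0, map_zero]))
      have htot : f' = ∑ i : Fin n,
          f' ≫ biproduct.π (fun i => tensorRep k (injRep k Q (a i)) (V i)) i ≫
            biproduct.ι (fun i => tensorRep k (injRep k Q (a i)) (V i)) i := by
        conv_lhs => rw [← Category.comp_id f', ← biproduct.total]
        rw [Preadditive.comp_sum]
      have hex : ∃ i : Fin n,
          (f' ≫ biproduct.π (fun i => tensorRep k (injRep k Q (a i)) (V i)) i).app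
            (vtx x) m ≠ 0 := by
        by_contra hc
        push_neg at hc
        apply hfm
        conv_lhs => rw [htot]
        rw [NatTrans.app_sum]; simp only [ModuleCat.hom_sum, LinearMap.coe_sum, Finset.sum_apply]
        refine Finset.sum_eq_zero fun i _ => ?_
        have hterm : ((f' ≫ biproduct.π (fun i => tensorRep k (injRep k Q (a i)) (V i)) i ≫
            biproduct.ι (fun i => tensorRep k (injRep k Q (a i)) (V i)) i).app (vtx x)) m =
            (biproduct.ι (fun i => tensorRep k (injRep k Q (a i)) (V i)) i).app (vtx x)
              ((f' ≫ biproduct.π (fun i => tensorRep k (injRep k Q (a i)) (V i)) i).app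
                (vtx x) m) := rfl
        rw [hterm, hc i, map_zero]
      obtain ⟨i, hne⟩ := hex
      set h := f' ≫ biproduct.π (fun i => tensorRep k (injRep k Q (a i)) (V i)) i with hh
      haveI : Finite (Quiver.Path x (a i)) := hQ.2.2 x (a i)
      set wx : TensorProduct k (Quiver.Path x (a i) → k) ↥(V i) := h.app (vtx x) m with hwx
      have hwx0 : wx ≠ 0 := hne
      obtain ⟨p, hp⟩ := exists_tcoord_ne_zero (w := wx) hwx0
      refine ⟨a i, Finset.mem_image_of_mem a (Finset.mem_univ i), p, ?_⟩
      intro z hz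
      obtain ⟨r, s, rfl⟩ := Aux.mem_dec p hz
      haveI : Finite (Quiver.Path z (a i)) := hQ.2.2 z (a i)
      have hnat := h.naturality (pth r)
      have h1 := LinearMap.congr_fun (congrArg ModuleCat.Hom.hom hnat) m
      have hmz : M.map (pth r) m ≠ 0 := by
        intro h0
        apply hp
        have h3 := whisker_injRep_tcoord (k := k) (Q := Q) (a i) r (V i) wx s
        rw [← h3]
        have h4 : (MonoidalCategory.whiskerRight ((injRep k Q (a i)).map (pth r)) (V i)) wx =
            h.app (vtx z) (M.map (pth r) m) := h1.symm
        rw [h4, h0, map_zero]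
        erw [map_zero]
        rfl
      exact nontrivial_of_ne _ _ hmz
    obtain ⟨pfun, harr, hmem⟩ := Aux.konig_left hQ.2.1 _ hSinf (Finset.univ.image a) hcov
    exact ⟨pfun, harr, hmem⟩
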